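/- Define, for orthogonal U ∈ ℝ^{d×d} and γ ∈ (0,1), the function Q*(s,a,g) on states s = (s¹; s²) ∈ ℝ^{2d}, actions a, goals g ∈ ℝ^d by: Q*(s,a,g) = γ gᵀ(s¹+Ua)/(1-γ²) + γ³‖g‖₂/(1-γ²)² if s¹ ≠ 0, and Q*(s,a,g) = gᵀs²/(1-γ²) + γ²‖g‖₂/(1-γ²)² if s¹ = 0. Then with π*(s,g) = Uᵀg/‖g‖₂ (g ≠ 0), Q* satisfies the Bellman equation Q*(s,a,g) = R(s',g) + γ Q*(s', π*(s',g), g) for the two-phase transition: if s¹ ≠ 0 then s' = (0; s¹+Ua), else s' = (s²; 0); with reward R(s,g) = gᵀ s¹. -/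

import Mathlib

open RealInnerProductSpace
open Classical

/-- Identification of `Fin d → ℝ` with Euclidean space `ℝ^d` (with the `ℓ²` norm). -/
noncomputable def toEuc {d : ℕ} (v : Fin d → ℝ) : EuclideanSpace ℝ (Fin d) :=
  (WithLp.equiv 2 (Fin d → ℝ)).symm v

/-- The optimal Q-function of the sparse two-phase rotation environment:
`Q*((s¹;s²),a,g) = γgᵀ(s¹+Ua)/(1-γ²) + γ³‖g‖₂/(1-γ²)²` if `s¹ ≠ 0`, and
`gᵀs²/(1-γ²) + γ²‖g‖₂/(1-γ²)²` if `s¹ = 0`. -/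
noncomputable def Qsparse {d : ℕ} (γ : ℝ) (U : Matrix (Fin d) (Fin d) ℝ)
    (s1 s2 a g : EuclideanSpace ℝ (Fin d)) : ℝ :=
  if s1 = 0 then
    ⟪g, s2⟫ / (1 - γ ^ 2) + γ ^ 2 * ‖g‖ / (1 - γ ^ 2) ^ 2
  else
    γ * ⟪g, s1 + toEuc (U.mulVec a)⟫ / (1 - γ ^ 2) + γ ^ 3 * ‖g‖ / (1 - γ ^ 2) ^ 2

/-- With `π*(s,g) = Uᵀg/‖g‖₂`, the piecewise `Q*` satisfies the Bellman equation
`Q*(s,a,g) = R(s',g) + γQ*(s',π*(s',g),g)` for the two-phase transition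
(`s' = (0; s¹+Ua)` if `s¹ ≠ 0`, else `s' = (s²; 0)`) with reward `R(s,g) = gᵀs¹`. -/
theorem sparse_bellman_fixed_point {d : ℕ} (γ : ℝ) (hγ0 : 0 < γ) (hγ1 : γ < 1)
    (U : Matrix (Fin d) (Fin d) ℝ) (hU : U ∈ Matrix.orthogonalGroup (Fin d) ℝ)
    (g s1 s2 a : EuclideanSpace ℝ (Fin d)) (hg : g ≠ 0)
    (hnz : s1 = 0 → s2 ≠ 0) :
    Qsparse γ U s1 s2 a g =
      ⟪g, (if s1 = 0 then s2 else 0 : EuclideanSpace ℝ (Fin d))⟫ +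
        γ * Qsparse γ U (if s1 = 0 then s2 else 0)
              (if s1 = 0 then 0 else s1 + toEuc (U.mulVec a))
              (‖g‖⁻¹ • toEuc (U.transpose.mulVec g)) g := by
  have h1 : (1 : ℝ) - γ ^ 2 ≠ 0 := by nlinarith
  have hng : ‖g‖ ≠ 0 := norm_ne_zero_iff.mpr hg
  by_cases hs : s1 = 0
  · have hs2 : s2 ≠ 0 := hnz hs
    have hUU : U * U.transpose = 1 := by
      have := (Matrix.mem_orthogonalGroup_iff (Fin d) ℝ).mp hU
      simpa using this
    have hact : U.mulVec (‖g‖⁻¹ • toEuc (U.transpose.mulVec g)) = ‖g‖⁻¹ • (g : Fin d → ℝ) := by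
      rw [Matrix.mulVec_smul]
      congr 1
      show U.mulVec (U.transpose.mulVec g) = g
      rw [Matrix.mulVec_mulVec, hUU, Matrix.one_mulVec]
    simp only [Qsparse, hs, if_pos, if_true, if_neg hs2]
    have hinner : ⟪g, s2 + toEuc (U.mulVec (‖g‖⁻¹ • toEuc (U.transpose.mulVec g)))⟫
        = ⟪g, s2⟫ + ‖g‖ := by
      rw [inner_add_right, hact]
      have : toEuc (‖g‖⁻¹ • (g : Fin d → ℝ)) = ‖g‖⁻¹ • g := rfl
      rw [this, real_inner_smul_right, real_inner_self_eq_norm_sq]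
      field_simp
    rw [WithLp.ofLp_smul, hinner]
    field_simp
    ring
  · simp only [Qsparse, hs, if_neg hs, if_false, if_pos rfl, if_true, inner_zero_right]
    field_simp
    ring
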